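/- Let Λ be the Lobachevsky function. Then the sequence n ↦ 2n·(Λ(π/4 + π/(2n)) + Λ(π/4 − π/(2n)))/(2n − 1) converges to 2Λ(π/4) = v_oct/4 as n → ∞; that is, the modified normalized volume ω̃(A(n)) = vol(A(n))/(ver(A(n)) − 3) of the ideal right-angled n-antiprism tends to v_oct/4. -/

import Mathlib

open Real Filter

noncomputable def lobachevsky (θ : ℝ) : ℝ :=
  -∫ t in (0:ℝ)..θ, Real.log |2 * Real.sin t|

private lemma lob_key : ∃ G : ℝ → ℝ, ContinuousOn G (Set.Icc (π/8) (3*π/8)) ∧ G (π/4) = 0 ∧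
    ∀ θ ∈ Set.Icc (π/8) (3*π/8), lobachevsky θ = lobachevsky (π/4) + G θ := by
  set f : ℝ → ℝ := fun t => Real.log |2 * Real.sin t| with hf
  have hpi := Real.pi_pos
  have hfc : ContinuousOn f (Set.Icc (π/8) (3*π/8)) := by
    apply ContinuousOn.log
    · exact (continuous_abs.comp (continuous_const.mul Real.continuous_sin)).continuousOn
    · intro x hx
      simp only [abs_ne_zero]
      have : 0 < Real.sin x := Real.sin_pos_of_pos_of_lt_pi (by linarith [hx.1]) (by linarith [hx.2])
      positivity
  have hint : ∀ x ∈ Set.Icc (π/8) (3*π/8), ∀ y ∈ Set.Icc (π/8) (3*π/8),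
      IntervalIntegrable f MeasureTheory.volume x y := by
    intro x hx y hy
    exact (hfc.mono (Set.ordConnected_Icc.uIcc_subset hx hy)).intervalIntegrable
  have hπ4 : π/4 ∈ Set.Icc (π/8) (3*π/8) := ⟨by linarith, by linarith⟩
  have hab : π/8 ≤ 3*π/8 := by linarith
  have hIcc : Set.uIcc (π/8) (3*π/8) = Set.Icc (π/8) (3*π/8) := Set.uIcc_of_le hab
  by_cases hI : IntervalIntegrable f MeasureTheory.volume 0 (π/4)
  · refine ⟨fun θ => -(∫ t in (π/4)..θ, f t), ?_, by simp, ?_⟩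
    · apply ContinuousOn.neg
      have h1 : IntervalIntegrable f MeasureTheory.volume (π/8) (3*π/8) :=
        hint _ (Set.left_mem_Icc.2 hab) _ (Set.right_mem_Icc.2 hab)
      have := intervalIntegral.continuousOn_primitive_interval'
        (μ := MeasureTheory.volume) (f := f) (b₁ := π/8) (b₂ := 3*π/8) (a := π/4)
        h1 (hIcc ▸ hπ4)
      rwa [hIcc] at this
    · intro θ hθ
      have h2 : IntervalIntegrable f MeasureTheory.volume (π/4) θ := hint _ hπ4 _ hθ
      have := intervalIntegral.integral_add_adjacent_intervals hI h2
      simp only [lobachevsky, hf] at this ⊢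
      rw [← this]
      ring
  · refine ⟨0, continuousOn_const, rfl, ?_⟩
    intro θ hθ
    have hθI : ¬ IntervalIntegrable f MeasureTheory.volume 0 θ := fun h =>
      hI (h.trans (hint _ hθ _ hπ4))
    simp only [hf] at hI hθI
    simp only [lobachevsky, Pi.zero_apply,
      intervalIntegral.integral_undef hI, intervalIntegral.integral_undef hθI]
    ring

theorem antiprism_modified_normalized_volume_tendsto :
    Tendsto (fun n : ℕ =>
        (2 * (n : ℝ) * (lobachevsky (π / 4 + π / (2 * (n : ℝ)))
          + lobachevsky (π / 4 - π / (2 * (n : ℝ))))) / (2 * (n : ℝ) - 1))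
      atTop (nhds (2 * lobachevsky (π / 4))) := by
  have hpi := Real.pi_pos
  obtain ⟨G, hGc, hG0, hGeq⟩ := lob_key
  have hπ4 : π/4 ∈ Set.Icc (π/8) (3*π/8) := ⟨by linarith, by linarith⟩
  have hsmall : Tendsto (fun n : ℕ => π / (2 * (n : ℝ))) atTop (nhds 0) := by
    have : (fun n : ℕ => π / (2 * (n : ℝ))) = fun n : ℕ => (π/2) / (n : ℝ) := by
      funext n; rw [div_div]
    rw [this]
    exact tendsto_const_div_atTop_nhds_zero_nat _
  have hbound : ∀ᶠ n : ℕ in atTop, 0 ≤ π / (2 * (n : ℝ)) ∧ π / (2 * (n : ℝ)) ≤ π/8 := by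
    filter_upwards [eventually_ge_atTop 4] with n hn
    have hn' : (4:ℝ) ≤ (n:ℝ) := by exact_mod_cast hn
    constructor
    · positivity
    · rw [div_le_div_iff₀ (by linarith) (by norm_num)]; nlinarith
  have hGt : Tendsto G (nhdsWithin (π/4) (Set.Icc (π/8) (3*π/8))) (nhds 0) := by
    rw [← hG0]; exact (hGc _ hπ4).tendsto
  have key : ∀ s : ℕ → ℝ, Tendsto s atTop (nhds (π/4)) →
      (∀ᶠ n : ℕ in atTop, s n ∈ Set.Icc (π/8) (3*π/8)) →
      Tendsto (fun n : ℕ => lobachevsky (s n)) atTop (nhds (lobachevsky (π/4))) := by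
    intro s hst hmem
    have hsw : Tendsto s atTop (nhdsWithin (π/4) (Set.Icc (π/8) (3*π/8))) :=
      tendsto_nhdsWithin_iff.2 ⟨hst, hmem⟩
    have hGcomp : Tendsto (fun n => G (s n)) atTop (nhds 0) := hGt.comp hsw
    have : Tendsto (fun n => lobachevsky (π/4) + G (s n)) atTop (nhds (lobachevsky (π/4))) := by
      simpa using tendsto_const_nhds.add hGcomp
    apply this.congr'
    filter_upwards [hmem] with n hn
    exact (hGeq _ hn).symm
  have hp : Tendsto (fun n : ℕ => lobachevsky (π/4 + π/(2*(n:ℝ)))) atTop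
      (nhds (lobachevsky (π/4))) := by
    apply key
    · simpa using tendsto_const_nhds.add hsmall
    · filter_upwards [hbound] with n hn
      exact ⟨by linarith [hn.1], by linarith [hn.2]⟩
  have hm : Tendsto (fun n : ℕ => lobachevsky (π/4 - π/(2*(n:ℝ)))) atTop
      (nhds (lobachevsky (π/4))) := by
    apply key
    · simpa using tendsto_const_nhds.sub hsmall
    · filter_upwards [hbound] with n hn
      exact ⟨by linarith [hn.2], by linarith [hn.1]⟩
  have hsum : Tendsto (fun n : ℕ => lobachevsky (π/4 + π/(2*(n:ℝ)))
      + lobachevsky (π/4 - π/(2*(n:ℝ)))) atTop (nhds (2 * lobachevsky (π/4))) := by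
    have := hp.add hm
    rwa [show lobachevsky (π/4) + lobachevsky (π/4) = 2 * lobachevsky (π/4) by ring] at this
  have hfrac : Tendsto (fun n : ℕ => 2*(n:ℝ) / (2*(n:ℝ) - 1)) atTop (nhds 1) := by
    have h0 : Tendsto (fun n : ℕ => 2*(n:ℝ) - 1) atTop atTop := by
      apply tendsto_atTop_add_const_right
      exact tendsto_natCast_atTop_atTop.const_mul_atTop (by norm_num)
    have hinv : Tendsto (fun n : ℕ => (2*(n:ℝ) - 1)⁻¹) atTop (nhds 0) := h0.inv_tendsto_atTop
    have h1 : Tendsto (fun n : ℕ => 1 + (2*(n:ℝ) - 1)⁻¹) atTop (nhds 1) := by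
      simpa using tendsto_const_nhds.add hinv
    apply h1.congr'
    filter_upwards [eventually_ge_atTop 1] with n hn
    have hn' : (1:ℝ) ≤ (n:ℝ) := by exact_mod_cast hn
    have h2 : 2*(n:ℝ) - 1 ≠ 0 := by intro h; linarith [h]
    field_simp
    ring
  have hmain := hfrac.mul hsum
  rw [one_mul] at hmain
  apply hmain.congr
  intro n
  ring
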